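/- arXiv:1302.4164 — 3 statements merged into one kernel-verified Lean document; each statement's English description precedes it below -/
import Mathlib

section
/- Let μ be a finite measure on a measurable space X, let s with 1 < s ≤ 2, and let Q_1 ⊇ Q_2 ⊇ ... be any finite family of measurable sets ordered by inclusion with nonnegative weights α_k attached and μ(Q_k) > 0. Then ∫_X (∑_k (α_k/μ(Q_k)) 1_{Q_k})^s dμ ≤ s · ∑_k α_k · ( (1/μ(Q_k)) ∑_{Q_j ⊆ Q_k} α_j )^{s-1}, where the inner sum ranges over indices j with Q_j ⊆ Q_k. -/
open MeasureTheory Finset Set in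
private lemma wolff_tangent_above {s x y : ℝ} (hs : 1 ≤ s) (hy : 0 ≤ y) (hxy : y ≤ x) :
    x ^ s - y ^ s ≤ s * (x - y) * x ^ (s - 1) := by
  rcases eq_or_lt_of_le hxy with rfl | h
  · simp
  · have hs0 : (0 : ℝ) < s := by linarith
    obtain ⟨c, hc, hceq⟩ := exists_hasDerivAt_eq_slope (fun t : ℝ => t ^ s)
      (fun t : ℝ => s * t ^ (s - 1)) h
      (fun t _ => ((Real.hasDerivAt_rpow_const (Or.inr hs)).continuousAt).continuousWithinAt)
      (fun t _ => Real.hasDerivAt_rpow_const (Or.inr hs))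
    have hc0 : 0 ≤ c := le_of_lt (lt_of_le_of_lt hy hc.1)
    have hne : x - y ≠ 0 := sub_ne_zero.mpr (ne_of_gt h)
    have heq : x ^ s - y ^ s = s * c ^ (s - 1) * (x - y) := by
      field_simp at hceq
      linarith [hceq]
    have hmon : c ^ (s - 1) ≤ x ^ (s - 1) :=
      Real.rpow_le_rpow hc0 (le_of_lt hc.2) (by linarith)
    have hxy0 : (0 : ℝ) ≤ x - y := by linarith
    calc x ^ s - y ^ s = s * c ^ (s - 1) * (x - y) := heq
      _ ≤ s * x ^ (s - 1) * (x - y) :=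
          mul_le_mul_of_nonneg_right (mul_le_mul_of_nonneg_left hmon hs0.le) hxy0
      _ = s * (x - y) * x ^ (s - 1) := by ring

open MeasureTheory Finset Set in
private lemma wolff_tangent_below {p A t : ℝ} (hp0 : 0 < p) (hp1 : p ≤ 1) (hA : 0 < A)
    (ht : 0 ≤ t) : t ^ p ≤ A ^ p + p * A ^ (p - 1) * (t - A) := by
  rcases lt_trichotomy t A with h | rfl | h
  · obtain ⟨c, hc, hceq⟩ := exists_hasDerivAt_eq_slope (fun u : ℝ => u ^ p)
      (fun u : ℝ => p * u ^ (p - 1)) h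
      (fun u _ => (Real.continuousAt_rpow_const u p (Or.inr hp0.le)).continuousWithinAt)
      (fun u hu => Real.hasDerivAt_rpow_const (Or.inl (ne_of_gt (lt_of_le_of_lt ht hu.1))))
    have hc0 : 0 < c := lt_of_le_of_lt ht hc.1
    have hne : A - t ≠ 0 := sub_ne_zero.mpr (ne_of_gt h)
    have heq : A ^ p - t ^ p = p * c ^ (p - 1) * (A - t) := by
      field_simp at hceq
      linarith [hceq]
    have hmon : A ^ (p - 1) ≤ c ^ (p - 1) :=
      Real.rpow_le_rpow_of_nonpos hc0 (le_of_lt hc.2) (by linarith)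
    nlinarith [mul_le_mul_of_nonneg_right (mul_le_mul_of_nonneg_left hmon hp0.le)
      (by linarith : (0:ℝ) ≤ A - t)]
  · simp
  · obtain ⟨c, hc, hceq⟩ := exists_hasDerivAt_eq_slope (fun u : ℝ => u ^ p)
      (fun u : ℝ => p * u ^ (p - 1)) h
      (fun u _ => (Real.continuousAt_rpow_const u p (Or.inr hp0.le)).continuousWithinAt)
      (fun u hu => Real.hasDerivAt_rpow_const (Or.inl (ne_of_gt (lt_trans hA hu.1))))
    have hne : t - A ≠ 0 := sub_ne_zero.mpr (ne_of_gt h)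
    have heq : t ^ p - A ^ p = p * c ^ (p - 1) * (t - A) := by
      field_simp at hceq
      linarith [hceq]
    have hmon : c ^ (p - 1) ≤ A ^ (p - 1) :=
      Real.rpow_le_rpow_of_nonpos hA (le_of_lt hc.1) (by linarith)
    nlinarith [mul_le_mul_of_nonneg_right (mul_le_mul_of_nonneg_left hmon hp0.le)
      (by linarith : (0:ℝ) ≤ t - A)]

open MeasureTheory Finset Set in
private lemma wolff_sum_ineq {ι : Type*} [LinearOrder ι] {s : ℝ} (hs : 1 ≤ s)
    (b : ι → ℝ) (hb : ∀ i, 0 ≤ b i) (F : Finset ι) :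
    (∑ i ∈ F, b i) ^ s ≤
      ∑ i ∈ F, s * b i * (∑ j ∈ F.filter (fun j => i ≤ j), b j) ^ (s - 1) := by
  classical
  induction F using Finset.induction_on_min with
  | empty => simp [Real.zero_rpow (by linarith : s ≠ 0)]
  | insert a F hmin ih =>
    have haF : a ∉ F := fun h => lt_irrefl a (hmin a h)
    have hT : 0 ≤ ∑ i ∈ F, b i := Finset.sum_nonneg fun i _ => hb i
    have h1 := wolff_tangent_above (x := b a + ∑ i ∈ F, b i) (y := ∑ i ∈ F, b i) hs hT
      (by linarith [hb a])
    have hfa : (insert a F).filter (fun j => a ≤ j) = insert a F := by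
      apply Finset.filter_true_of_mem
      intro x hx
      rcases Finset.mem_insert.mp hx with rfl | h
      · exact le_rfl
      · exact (hmin x h).le
    have h2 : ∑ i ∈ F, s * b i * (∑ j ∈ (insert a F).filter (fun j => i ≤ j), b j) ^ (s - 1)
        = ∑ i ∈ F, s * b i * (∑ j ∈ F.filter (fun j => i ≤ j), b j) ^ (s - 1) := by
      refine Finset.sum_congr rfl fun i hi => ?_
      rw [Finset.filter_insert, if_neg (not_le.mpr (hmin i hi))]
    rw [Finset.sum_insert haF, Finset.sum_insert haF, h2, hfa, Finset.sum_insert haF]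
    linarith [h1, ih]

open MeasureTheory Finset Classical in

theorem wolff_lemma_nested_small_exponent {X : Type*} [MeasurableSpace X]
    (μ : Measure X) [IsFiniteMeasure μ] (s : ℝ) (hs1 : 1 < s) (hs2 : s ≤ 2)
    (N : ℕ) (Q : Fin N → Set X) (hmeas : ∀ k, MeasurableSet (Q k))
    (hnested : ∀ k l : Fin N, k ≤ l → Q l ⊆ Q k)
    (α : Fin N → ℝ) (hα : ∀ k, 0 ≤ α k) (hpos : ∀ k, 0 < (μ (Q k)).toReal) :
    ∫ x, (∑ k, α k / (μ (Q k)).toReal * (Q k).indicator 1 x) ^ s ∂μ ≤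
      s * ∑ k, α k *
        ((1 / (μ (Q k)).toReal) *
          ∑ l ∈ Finset.univ.filter fun l => Q l ⊆ Q k, α l) ^ (s - 1) := by
  have hp0 : (0 : ℝ) < s - 1 := by linarith
  have hp1 : s - 1 ≤ 1 := by linarith
  have hs0 : (0 : ℝ) < s := by linarith
  set p : ℝ := s - 1 with hpdef
  set c : Fin N → ℝ := fun k => α k / (μ (Q k)).toReal with hcdef
  have hc0 : ∀ k, 0 ≤ c k := fun k => div_nonneg (hα k) (hpos k).le
  have hcα : ∀ k, c k * (μ (Q k)).toReal = α k := fun k =>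
    div_mul_cancel₀ (α k) (ne_of_gt (hpos k))
  have hind0 : ∀ (k : Fin N) (x : X), 0 ≤ (Q k).indicator (1 : X → ℝ) x :=
    fun k x => Set.indicator_nonneg (fun _ _ => zero_le_one) x
  have hind1 : ∀ (k : Fin N) (x : X), (Q k).indicator (1 : X → ℝ) x ≤ 1 := by
    intro k x
    by_cases h : x ∈ Q k <;> simp [Set.indicator, h]
  have hindmeas : ∀ k : Fin N, Measurable ((Q k).indicator (1 : X → ℝ)) :=
    fun k => measurable_const.indicator (hmeas k)
  set F : Fin N → Finset (Fin N) := fun k => Finset.univ.filter (fun l => k ≤ l) with hFdef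
  set g : Fin N → X → ℝ := fun k x => ∑ l ∈ F k, c l * (Q l).indicator 1 x with hgdef
  set C : ℝ := ∑ k, c k with hCdef
  have hC0 : 0 ≤ C := Finset.sum_nonneg fun k _ => hc0 k
  have hgmeas : ∀ k, Measurable (g k) :=
    fun k => Finset.measurable_sum _ fun l _ => (hindmeas l).const_mul _
  have hg0 : ∀ k x, 0 ≤ g k x :=
    fun k x => Finset.sum_nonneg fun l _ => mul_nonneg (hc0 l) (hind0 l x)
  have hgC : ∀ k x, g k x ≤ C := by
    intro k x
    calc g k x ≤ ∑ l ∈ F k, c l :=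
          Finset.sum_le_sum fun l _ => mul_le_of_le_one_right (hc0 l) (hind1 l x)
      _ ≤ C := Finset.sum_le_sum_of_subset_of_nonneg (Finset.filter_subset _ _)
          (fun l _ _ => hc0 l)
  set f : X → ℝ := fun x => ∑ k, c k * (Q k).indicator 1 x with hfdef
  have hf0 : ∀ x, 0 ≤ f x :=
    fun x => Finset.sum_nonneg fun k _ => mul_nonneg (hc0 k) (hind0 k x)
  have int_of_bound : ∀ (h : X → ℝ), Measurable h → ∀ M : ℝ, (∀ x, ‖h x‖ ≤ M) →
      Integrable h μ := fun h hm M hb =>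
    (integrable_const M).mono' hm.aestronglyMeasurable (ae_of_all _ hb)
  -- pointwise elementary inequality
  have step1 : ∀ x, f x ^ s ≤ ∑ k, s * (c k * (Q k).indicator 1 x) * (g k x) ^ p := by
    intro x
    have h := wolff_sum_ineq (le_of_lt hs1) (fun k => c k * (Q k).indicator 1 x)
      (fun k => mul_nonneg (hc0 k) (hind0 k x)) (Finset.univ : Finset (Fin N))
    convert h using 4 with k
  -- integrability of the summands
  have hgpmeas : ∀ k : Fin N, Measurable (fun x => (g k x) ^ p) := fun k =>
    (Real.continuous_rpow_const hp0.le).measurable.comp (hgmeas k)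
  have hgpC : ∀ k x, (g k x) ^ p ≤ C ^ p := fun k x =>
    Real.rpow_le_rpow (hg0 k x) (hgC k x) hp0.le
  have hgp0 : ∀ k x, 0 ≤ (g k x) ^ p := fun k x => Real.rpow_nonneg (hg0 k x) p
  have hint : ∀ k : Fin N,
      Integrable (fun x => s * (c k * (Q k).indicator 1 x) * (g k x) ^ p) μ := by
    intro k
    apply int_of_bound _ ((((hindmeas k).const_mul (c k)).const_mul s).mul (hgpmeas k))
      (s * c k * C ^ p)
    intro x
    simp only [Pi.mul_apply]
    rw [Real.norm_eq_abs, abs_of_nonneg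
      (mul_nonneg (mul_nonneg hs0.le (mul_nonneg (hc0 k) (hind0 k x))) (hgp0 k x))]
    calc s * (c k * (Q k).indicator 1 x) * (g k x) ^ p
        ≤ s * (c k * 1) * (C ^ p) := by
          exact mul_le_mul (mul_le_mul_of_nonneg_left
              (mul_le_mul_of_nonneg_left (hind1 k x) (hc0 k)) hs0.le)
            (hgpC k x) (hgp0 k x)
            (mul_nonneg hs0.le (mul_nonneg (hc0 k) zero_le_one))
      _ = s * c k * C ^ p := by ring
  -- step 2: integrate the pointwise inequality
  have step2 : ∫ x, f x ^ s ∂μ ≤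
      ∑ k, ∫ x, s * (c k * (Q k).indicator 1 x) * (g k x) ^ p ∂μ := by
    rw [← integral_finset_sum _ (fun k _ => hint k)]
    exact integral_mono_of_nonneg (ae_of_all _ fun x => Real.rpow_nonneg (hf0 x) s)
      (integrable_finset_sum _ (fun k _ => hint k)) (ae_of_all _ step1)
  -- basic integrals
  have hIind : ∀ k : Fin N, ∫ x, (Q k).indicator (1 : X → ℝ) x ∂μ = (μ (Q k)).toReal :=
    fun k => integral_indicator_one (hmeas k)
  have hIkl : ∀ k l : Fin N, k ≤ l →
      ∫ x, (Q k).indicator 1 x * (Q l).indicator 1 x ∂μ = (μ (Q l)).toReal := by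
    intro k l hkl
    have h1 : (fun x => (Q k).indicator (1 : X → ℝ) x * (Q l).indicator 1 x)
        = (Q l).indicator (1 : X → ℝ) := by
      funext x
      by_cases hx : x ∈ Q l
      · have hxk : x ∈ Q k := hnested k l hkl hx
        simp [Set.indicator_of_mem, hx, hxk]
      · simp [Set.indicator_of_notMem, hx]
    rw [h1]
    exact integral_indicator_one (hmeas l)
  have hintkl : ∀ k l : Fin N,
      Integrable (fun x => (Q k).indicator (1 : X → ℝ) x * (Q l).indicator 1 x) μ := by
    intro k l
    apply int_of_bound _ ((hindmeas k).mul (hindmeas l)) 1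
    intro x
    simp only [Pi.mul_apply]
    rw [Real.norm_eq_abs, abs_of_nonneg (mul_nonneg (hind0 k x) (hind0 l x))]
    calc (Q k).indicator (1 : X → ℝ) x * (Q l).indicator 1 x
        ≤ 1 * 1 := mul_le_mul (hind1 k x) (hind1 l x) (hind0 l x) zero_le_one
      _ = 1 := one_mul 1
  have hIg : ∀ k : Fin N, ∫ x, (Q k).indicator 1 x * g k x ∂μ = ∑ l ∈ F k, α l := by
    intro k
    have h1 : (fun x => (Q k).indicator (1 : X → ℝ) x * g k x)
        = fun x => ∑ l ∈ F k, c l * ((Q k).indicator 1 x * (Q l).indicator 1 x) := by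
      funext x
      rw [hgdef]
      simp only
      rw [Finset.mul_sum]
      exact Finset.sum_congr rfl fun l _ => by ring
    rw [h1, integral_finset_sum _ (fun l _ => ((hintkl k l).const_mul (c l)))]
    refine Finset.sum_congr rfl fun l hl => ?_
    have hkl : k ≤ l := by
      rw [hFdef] at hl
      simpa using (Finset.mem_filter.mp hl).2
    rw [integral_const_mul _ _, hIkl k l hkl, hcα l]
  -- step 3: Jensen via the tangent line of the concave function t ↦ t ^ p
  set A : Fin N → ℝ := fun k => (∑ l ∈ F k, α l) / (μ (Q k)).toReal with hAdef
  have hA0 : ∀ k, 0 ≤ A k :=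
    fun k => div_nonneg (Finset.sum_nonneg fun l _ => hα l) (hpos k).le
  have hAsum : ∀ k, A k * (μ (Q k)).toReal = ∑ l ∈ F k, α l :=
    fun k => div_mul_cancel₀ _ (ne_of_gt (hpos k))
  have hintgp : ∀ k : Fin N,
      Integrable (fun x => (Q k).indicator 1 x * (g k x) ^ p) μ := by
    intro k
    apply int_of_bound _ ((hindmeas k).mul (hgpmeas k)) (1 * C ^ p)
    intro x
    simp only [Pi.mul_apply]
    rw [Real.norm_eq_abs, abs_of_nonneg (mul_nonneg (hind0 k x) (hgp0 k x))]
    exact mul_le_mul (hind1 k x) (hgpC k x) (hgp0 k x) zero_le_one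
  have step3 : ∀ k : Fin N, ∫ x, (Q k).indicator 1 x * (g k x) ^ p ∂μ ≤
      (μ (Q k)).toReal * (A k) ^ p := by
    intro k
    rcases eq_or_lt_of_le (hA0 k) with hA | hA
    · -- A k = 0 : all α l vanish for l ∈ F k, hence g k ≡ 0
      have hsum0 : ∑ l ∈ F k, α l = 0 := by
        rw [← hAsum k, ← hA, zero_mul]
      have hα0 : ∀ l ∈ F k, α l = 0 :=
        (Finset.sum_eq_zero_iff_of_nonneg (fun l _ => hα l)).mp hsum0
      have hgz : ∀ x, g k x = 0 := by
        intro x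
        refine Finset.sum_eq_zero fun l hl => ?_
        have : c l = 0 := by rw [hcdef]; simp [hα0 l hl]
        rw [this, zero_mul]
      have hz : (fun x => (Q k).indicator (1 : X → ℝ) x * (g k x) ^ p) = fun _ => 0 := by
        funext x
        rw [hgz x, Real.zero_rpow (ne_of_gt hp0), mul_zero]
      rw [hz, integral_zero, ← hA, Real.zero_rpow (ne_of_gt hp0), mul_zero]
    · -- A k > 0 : tangent line argument
      have hpt : ∀ x, (Q k).indicator 1 x * (g k x) ^ p ≤
          (A k ^ p - p * A k ^ (p - 1) * A k) * (Q k).indicator 1 x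
            + (p * A k ^ (p - 1)) * ((Q k).indicator 1 x * g k x) := by
        intro x
        have ht := wolff_tangent_below hp0 hp1 hA (hg0 k x)
        have h2 := mul_le_mul_of_nonneg_left ht (hind0 k x)
        calc (Q k).indicator 1 x * (g k x) ^ p
            ≤ (Q k).indicator 1 x * (A k ^ p + p * A k ^ (p - 1) * (g k x - A k)) := h2
          _ = (A k ^ p - p * A k ^ (p - 1) * A k) * (Q k).indicator 1 x
              + (p * A k ^ (p - 1)) * ((Q k).indicator 1 x * g k x) := by ring
      have hintg : Integrable (fun x => (Q k).indicator (1 : X → ℝ) x * g k x) μ := by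
        apply int_of_bound _ ((hindmeas k).mul (hgmeas k)) (1 * C)
        intro x
        simp only [Pi.mul_apply]
        rw [Real.norm_eq_abs, abs_of_nonneg (mul_nonneg (hind0 k x) (hg0 k x))]
        exact mul_le_mul (hind1 k x) (hgC k x) (hg0 k x) zero_le_one
      have hintind : Integrable ((Q k).indicator (1 : X → ℝ)) μ := by
        apply int_of_bound _ (hindmeas k) 1
        intro x
        rw [Real.norm_eq_abs, abs_of_nonneg (hind0 k x)]
        exact hind1 k x
      have hrhs : ∫ x, ((A k ^ p - p * A k ^ (p - 1) * A k) * (Q k).indicator 1 x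
            + (p * A k ^ (p - 1)) * ((Q k).indicator 1 x * g k x)) ∂μ
          = (μ (Q k)).toReal * (A k) ^ p := by
        rw [integral_add (hintind.const_mul _) (hintg.const_mul _),
          integral_const_mul _ _, integral_const_mul _ _, hIind k, hIg k, ← hAsum k]
        ring
      calc ∫ x, (Q k).indicator 1 x * (g k x) ^ p ∂μ
          ≤ ∫ x, ((A k ^ p - p * A k ^ (p - 1) * A k) * (Q k).indicator 1 x
              + (p * A k ^ (p - 1)) * ((Q k).indicator 1 x * g k x)) ∂μ :=
            integral_mono (hintgp k) ((hintind.const_mul _).add (hintg.const_mul _)) hpt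
        _ = (μ (Q k)).toReal * (A k) ^ p := hrhs
  -- step 4: evaluate each summand
  have step4 : ∀ k : Fin N, ∫ x, s * (c k * (Q k).indicator 1 x) * (g k x) ^ p ∂μ ≤
      s * (α k * A k ^ p) := by
    intro k
    have h1 : (fun x => s * (c k * (Q k).indicator 1 x) * (g k x) ^ p)
        = fun x => (s * c k) * ((Q k).indicator 1 x * (g k x) ^ p) :=
      funext fun x => by ring
    rw [h1, integral_const_mul _ _]
    calc (s * c k) * ∫ x, (Q k).indicator 1 x * (g k x) ^ p ∂μ
        ≤ (s * c k) * ((μ (Q k)).toReal * (A k) ^ p) :=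
          mul_le_mul_of_nonneg_left (step3 k) (mul_nonneg hs0.le (hc0 k))
      _ = s * ((c k * (μ (Q k)).toReal) * A k ^ p) := by ring
      _ = s * (α k * A k ^ p) := by rw [hcα k]
  -- step 5: enlarge the index set of the inner sum
  have step5 : ∀ k : Fin N, α k * A k ^ p ≤
      α k * ((1 / (μ (Q k)).toReal) *
        ∑ l ∈ Finset.univ.filter fun l => Q l ⊆ Q k, α l) ^ p := by
    intro k
    apply mul_le_mul_of_nonneg_left _ (hα k)
    apply Real.rpow_le_rpow (hA0 k) _ hp0.le
    have hsub : ∑ l ∈ F k, α l ≤ ∑ l ∈ Finset.univ.filter (fun l => Q l ⊆ Q k), α l := by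
      apply Finset.sum_le_sum_of_subset_of_nonneg _ (fun l _ _ => hα l)
      intro l hl
      rw [hFdef] at hl
      simp only [Finset.mem_filter, Finset.mem_univ, true_and] at hl ⊢
      exact hnested k l hl
    show (∑ l ∈ F k, α l) / (μ (Q k)).toReal ≤ _
    rw [one_div_mul_eq_div]
    exact (div_le_div_iff_of_pos_right (hpos k)).mpr hsub
  calc ∫ x, (∑ k, α k / (μ (Q k)).toReal * (Q k).indicator 1 x) ^ s ∂μ
      = ∫ x, f x ^ s ∂μ := rfl
    _ ≤ ∑ k, ∫ x, s * (c k * (Q k).indicator 1 x) * (g k x) ^ p ∂μ := step2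
    _ ≤ ∑ k, s * (α k * A k ^ p) := Finset.sum_le_sum fun k _ => step4 k
    _ = s * ∑ k, α k * A k ^ p := by rw [Finset.mul_sum]
    _ ≤ s * ∑ k, α k * ((1 / (μ (Q k)).toReal) *
          ∑ l ∈ Finset.univ.filter fun l => Q l ⊆ Q k, α l) ^ p :=
        mul_le_mul_of_nonneg_left (Finset.sum_le_sum fun k _ => step5 k) hs0.le
end

section
/- Let σ be a nonnegative measure, s > 1, and let {α_Q}_{Q ∈ D} be nonnegative reals indexed by a finite family D of dyadic cubes contained in a fixed cube Q_0, with only finitely many α_Q nonzero. Define A_2 = ∑_{Q ⊆ Q_0} α_Q ((1/σ(Q)) ∑_{Q' ⊆ Q} α_{Q'})^{s-1} and A_3 = ∫_{Q_0} sup_{x ∈ Q ⊆ Q_0} ((1/σ(Q)) ∑_{Q' ⊆ Q} α_{Q'})^s dσ(x). If additionally A_1 = ∫_{Q_0} (∑_{Q ⊆ Q_0} (α_Q/σ(Q)) 1_Q)^s dσ satisfies A_1 ≤ c A_2 for some constant c, then A_2 ≤ c^{1/(s-1)} A_3. -/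
open MeasureTheory Finset Classical

noncomputable section

def dyadicCube (n : ℕ) (i : ℤ) (k : Fin n → ℤ) : Set (Fin n → ℝ) :=
  {x | ∀ j, (k j : ℝ) * 2 ^ (-i) ≤ x j ∧ x j < ((k j : ℝ) + 1) * 2 ^ (-i)}

def IsDyadicCube (n : ℕ) (Q : Set (Fin n → ℝ)) : Prop :=
  ∃ i k, Q = dyadicCube n i k

lemma IsDyadicCube.measurableSet' {n : ℕ} {Q : Set (Fin n → ℝ)} (h : IsDyadicCube n Q) :
    MeasurableSet Q := by
  obtain ⟨i, k, rfl⟩ := h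
  have : dyadicCube n i k = Set.pi Set.univ
      (fun j => Set.Ico ((k j : ℝ) * 2 ^ (-i)) (((k j : ℝ) + 1) * 2 ^ (-i))) := by
    ext x; simp [dyadicCube, Set.mem_pi, Set.mem_Ico]
  rw [this]
  exact MeasurableSet.univ_pi fun j => measurableSet_Ico

theorem wolff_lemma_A2_le_A3 (n : ℕ) (σ : Measure (Fin n → ℝ))
    (s : ℝ) (hs : 1 < s) {ι : Type*} [Fintype ι]
    (Q : ι → Set (Fin n → ℝ)) (Q₀ : Set (Fin n → ℝ))
    (hQ₀ : IsDyadicCube n Q₀) (hQ : ∀ i, IsDyadicCube n (Q i))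
    (hsub : ∀ i, Q i ⊆ Q₀) (hpos : ∀ i, 0 < (σ (Q i)).toReal)
    (α : ι → ℝ) (hα : ∀ i, 0 ≤ α i) (c : ℝ) (hc : 0 ≤ c)
    (hA12 : ∫ x in Q₀, (∑ i, α i / (σ (Q i)).toReal * (Q i).indicator 1 x) ^ s ∂σ ≤
      c * ∑ i, α i * ((1 / (σ (Q i)).toReal) *
        ∑ j ∈ Finset.univ.filter fun j => Q j ⊆ Q i, α j) ^ (s - 1)) :
    ∑ i, α i * ((1 / (σ (Q i)).toReal) *
        ∑ j ∈ Finset.univ.filter fun j => Q j ⊆ Q i, α j) ^ (s - 1) ≤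
      c ^ (1 / (s - 1)) *
        ∫ x in Q₀, (⨆ i, (Q i).indicator
          (fun _ => (1 / (σ (Q i)).toReal) *
            ∑ j ∈ Finset.univ.filter fun j => Q j ⊆ Q i, α j) x) ^ s ∂σ := by
  classical
  rcases isEmpty_or_nonempty ι with hι | hι
  · have hs0 : s ≠ 0 := by linarith
    simp [ciSup_of_empty, Real.sSup_empty, Real.zero_rpow hs0]
  -- Notation
  set T : ι → ℝ := fun i => (1 / (σ (Q i)).toReal) *
      ∑ j ∈ Finset.univ.filter fun j => Q j ⊆ Q i, α j with hTdef
  have hmQ : ∀ i, MeasurableSet (Q i) := fun i => (hQ i).measurableSet'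
  have hσ0 : ∀ i, (σ (Q i)).toReal ≠ 0 := fun i => ne_of_gt (hpos i)
  have hfin : ∀ i, σ (Q i) ≠ ⊤ := by
    intro i h
    have := hpos i
    rw [h] at this
    simp at this
  have hT0 : ∀ i, 0 ≤ T i := fun i =>
    mul_nonneg (by positivity) (Finset.sum_nonneg fun j _ => hα j)
  set M : (Fin n → ℝ) → ℝ := fun x => ⨆ i, (Q i).indicator (fun _ => T i) x with hMdef
  set f : (Fin n → ℝ) → ℝ := fun x => ∑ i, α i / (σ (Q i)).toReal * (Q i).indicator 1 x
    with hfdef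
  have hbdd : ∀ x, BddAbove (Set.range fun i => (Q i).indicator (fun _ => T i) x) :=
    fun x => (Set.finite_range _).bddAbove
  have hM0 : ∀ x, 0 ≤ M x := by
    intro x
    obtain ⟨i⟩ := hι
    exact le_trans (Set.indicator_nonneg (fun _ _ => hT0 i) x) (le_ciSup (hbdd x) i)
  have hMle : ∀ x i, x ∈ Q i → T i ≤ M x := by
    intro x i hx
    have := le_ciSup (hbdd x) i
    rwa [Set.indicator_of_mem hx] at this
  have hMbound : ∀ x, M x ≤ ∑ i, T i := by
    intro x
    refine ciSup_le fun i => ?_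
    by_cases hx : x ∈ Q i
    · rw [Set.indicator_of_mem hx]
      exact Finset.single_le_sum (fun j _ => hT0 j) (Finset.mem_univ i)
    · rw [Set.indicator_of_notMem hx]
      exact Finset.sum_nonneg fun j _ => hT0 j
  have hM_meas : Measurable M :=
    Measurable.iSup fun i => measurable_const.indicator (hmQ i)
  have hf_meas : Measurable f :=
    Finset.measurable_sum _ fun i _ => (measurable_const.indicator (hmQ i)).const_mul _
  have hf0 : ∀ x, 0 ≤ f x := fun x =>
    Finset.sum_nonneg fun i _ => mul_nonneg (div_nonneg (hα i) ENNReal.toReal_nonneg)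
      (Set.indicator_nonneg (fun _ _ => zero_le_one) x)
  -- the union of the cubes
  set U : Set (Fin n → ℝ) := ⋃ i, Q i with hUdef
  have hU_meas : MeasurableSet U := MeasurableSet.iUnion fun i => hmQ i
  set μ : Measure (Fin n → ℝ) := σ.restrict Q₀ with hμdef
  have hμU : μ U < ⊤ := by
    calc μ U ≤ σ U := Measure.restrict_apply_le _ _
    _ ≤ ∑' i, σ (Q i) := measure_iUnion_le _
    _ = ∑ i, σ (Q i) := tsum_fintype _
    _ < ⊤ := ENNReal.sum_lt_top.2 fun i _ => (hfin i).lt_top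
  have hf_boundU : ∀ x, f x ≤ U.indicator (fun _ => ∑ i, α i / (σ (Q i)).toReal) x := by
    intro x
    by_cases hx : x ∈ U
    · rw [Set.indicator_of_mem hx]
      refine Finset.sum_le_sum fun i _ => ?_
      by_cases hxi : x ∈ Q i
      · rw [Set.indicator_of_mem hxi]
        simp
      · rw [Set.indicator_of_notMem hxi]
        simp [div_nonneg (hα i) ENNReal.toReal_nonneg]
    · rw [Set.indicator_of_notMem hx]
      have : ∀ i, x ∉ Q i := by
        intro i hxi
        exact hx (Set.mem_iUnion.2 ⟨i, hxi⟩)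
      simp only [hfdef]
      rw [Finset.sum_eq_zero]
      intro i _
      rw [Set.indicator_of_notMem (this i), mul_zero]
  have hM_zero : ∀ x, x ∉ U → M x = 0 := by
    intro x hx
    have h : ∀ i, x ∉ Q i := fun i hxi => hx (Set.mem_iUnion.2 ⟨i, hxi⟩)
    simp only [hMdef]
    rw [funext fun i => Set.indicator_of_notMem (h i) _]
    exact ciSup_const
  -- generic integrability of bounded functions supported in U
  have hkey : ∀ (h : (Fin n → ℝ) → ℝ) (C : ℝ), Measurable h →
      (∀ x, ‖h x‖ ≤ U.indicator (fun _ => C) x) → Integrable h μ := by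
    intro h C hm hb
    refine Integrable.mono' ?_ hm.aestronglyMeasurable (Filter.Eventually.of_forall hb)
    exact (integrable_indicator_iff hU_meas).2 (integrableOn_const hμU.ne)
  have hint_ind : ∀ (i : ι) (b : ℝ), Integrable ((Q i).indicator (fun _ => b)) μ := by
    intro i b
    refine (integrable_indicator_iff (hmQ i)).2 (integrableOn_const (ne_of_lt ?_))
    calc μ (Q i) ≤ σ (Q i) := Measure.restrict_apply_le _ _
    _ < ⊤ := (hfin i).lt_top
  -- conjugate exponent
  set s' : ℝ := s / (s - 1) with hs'def
  have hs1 : (0:ℝ) < s - 1 := by linarith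
  have hpq : s.HolderConjugate s' := (Real.holderConjugate_iff_eq_conjExponent hs).2 (by
    rw [hs'def])
  have hs'pos : 0 < s' := hpq.symm.pos
  -- Step 1 : A₂ ≤ ∫ f * M^(s-1)
  have hg_meas : Measurable fun x => M x ^ (s - 1) :=
    (Real.continuous_rpow_const (by linarith : (0:ℝ) ≤ s - 1)).measurable.comp hM_meas
  have hfM_int : Integrable (fun x => f x * M x ^ (s - 1)) μ := by
    refine hkey _ ((∑ i, α i / (σ (Q i)).toReal) * (∑ i, T i) ^ (s - 1))
      (hf_meas.mul hg_meas) ?_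
    intro x
    by_cases hx : x ∈ U
    · rw [Set.indicator_of_mem hx]
      rw [Real.norm_of_nonneg (mul_nonneg (hf0 x) (Real.rpow_nonneg (hM0 x) _))]
      have h1 : f x ≤ ∑ i, α i / (σ (Q i)).toReal := by
        have := hf_boundU x
        rwa [Set.indicator_of_mem hx] at this
      have h2 : M x ^ (s - 1) ≤ (∑ i, T i) ^ (s - 1) :=
        Real.rpow_le_rpow (hM0 x) (hMbound x) (le_of_lt hs1)
      exact mul_le_mul h1 h2 (Real.rpow_nonneg (hM0 x) _) (Finset.sum_nonneg fun i _ =>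
        div_nonneg (hα i) ENNReal.toReal_nonneg)
    · rw [Set.indicator_of_notMem hx]
      have hf_zero : f x = 0 := le_antisymm (by
        have := hf_boundU x
        rwa [Set.indicator_of_notMem hx] at this) (hf0 x)
      rw [hf_zero, zero_mul, norm_zero]
  have step1 : (∑ i, α i * T i ^ (s - 1)) ≤ ∫ x, f x * M x ^ (s - 1) ∂μ := by
    have heq : ∀ i, α i * T i ^ (s - 1) =
        ∫ x, (Q i).indicator (fun _ => α i / (σ (Q i)).toReal * T i ^ (s - 1)) x ∂μ := by
      intro i
      rw [integral_indicator_const _ (hmQ i), hμdef, measureReal_restrict_apply (hmQ i), measureReal_def,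
        Set.inter_eq_self_of_subset_left (hsub i), smul_eq_mul]
      have hcancel : (σ (Q i)).toReal * (α i / (σ (Q i)).toReal) = α i := by
        rw [mul_comm]
        exact div_mul_cancel₀ (α i) (hσ0 i)
      rw [← mul_assoc, hcancel]
    calc (∑ i, α i * T i ^ (s - 1))
        = ∑ i, ∫ x, (Q i).indicator (fun _ => α i / (σ (Q i)).toReal * T i ^ (s - 1)) x ∂μ :=
          Finset.sum_congr rfl fun i _ => heq i
      _ = ∫ x, ∑ i, (Q i).indicator (fun _ => α i / (σ (Q i)).toReal * T i ^ (s - 1)) x ∂μ :=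
          (integral_finset_sum _ fun i _ => hint_ind i _).symm
      _ ≤ ∫ x, f x * M x ^ (s - 1) ∂μ := by
          refine integral_mono (integrable_finset_sum _ fun i _ => hint_ind i _) hfM_int ?_
          intro x
          simp only [hfdef]
          rw [Finset.sum_mul]
          refine Finset.sum_le_sum fun i _ => ?_
          by_cases hx : x ∈ Q i
          · rw [Set.indicator_of_mem hx, Set.indicator_of_mem hx, Pi.one_apply, mul_one]
            exact mul_le_mul_of_nonneg_left
              (Real.rpow_le_rpow (hT0 i) (hMle x i hx) (le_of_lt hs1))
              (div_nonneg (hα i) ENNReal.toReal_nonneg)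
          · rw [Set.indicator_of_notMem hx, Set.indicator_of_notMem hx, mul_zero, zero_mul]
  -- Step 2 : Hölder
  have hmem_f : MemLp f (ENNReal.ofReal s) μ := by
    refine MemLp.of_le (memLp_indicator_const _ hU_meas
      (∑ i, α i / (σ (Q i)).toReal) (Or.inr hμU.ne)) hf_meas.aestronglyMeasurable ?_
    refine Filter.Eventually.of_forall fun x => ?_
    rw [Real.norm_of_nonneg (hf0 x)]
    refine le_trans (hf_boundU x) (le_abs_self _)
  have hmem_g : MemLp (fun x => M x ^ (s - 1)) (ENNReal.ofReal s') μ := by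
    refine MemLp.of_le (memLp_indicator_const _ hU_meas
      ((∑ i, T i) ^ (s - 1)) (Or.inr hμU.ne)) hg_meas.aestronglyMeasurable ?_
    refine Filter.Eventually.of_forall fun x => ?_
    rw [Real.norm_of_nonneg (Real.rpow_nonneg (hM0 x) _)]
    by_cases hx : x ∈ U
    · rw [Set.indicator_of_mem hx]
      exact le_trans (Real.rpow_le_rpow (hM0 x) (hMbound x) (le_of_lt hs1)) (le_abs_self _)
    · rw [Set.indicator_of_notMem hx, hM_zero x hx, norm_zero,
        Real.zero_rpow (ne_of_gt hs1)]
  have step2 : ∫ x, f x * M x ^ (s - 1) ∂μ ≤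
      (∫ x, f x ^ s ∂μ) ^ (1 / s) * (∫ x, (M x ^ (s - 1)) ^ s' ∂μ) ^ (1 / s') :=
    integral_mul_le_Lp_mul_Lq_of_nonneg hpq (Filter.Eventually.of_forall hf0)
      (Filter.Eventually.of_forall fun x => Real.rpow_nonneg (hM0 x) _) hmem_f hmem_g
  have hss' : (s - 1) * s' = s := by
    rw [hs'def]
    field_simp
  have hpow_eq : ∀ x, (M x ^ (s - 1)) ^ s' = M x ^ s := by
    intro x
    rw [← Real.rpow_mul (hM0 x), hss']
  -- Abbreviations for the three quantities
  set A2 : ℝ := ∑ i, α i * T i ^ (s - 1) with hA2def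
  set A1 : ℝ := ∫ x, f x ^ s ∂μ with hA1def
  set A3 : ℝ := ∫ x, M x ^ s ∂μ with hA3def
  have hMs_eq : (∫ x, (M x ^ (s - 1)) ^ s' ∂μ) = A3 := by
    rw [hA3def]
    exact integral_congr_ae (Filter.Eventually.of_forall fun x => hpow_eq x)
  have hA1nonneg : 0 ≤ A1 :=
    integral_nonneg fun x => Real.rpow_nonneg (hf0 x) _
  have hA3nonneg : 0 ≤ A3 :=
    integral_nonneg fun x => Real.rpow_nonneg (hM0 x) _
  have hA2nonneg : 0 ≤ A2 :=
    Finset.sum_nonneg fun i _ => mul_nonneg (hα i) (Real.rpow_nonneg (hT0 i) _)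
  have hA1le : A1 ≤ c * A2 := hA12
  have hmain : A2 ≤ A1 ^ (1 / s) * A3 ^ (1 / s') := by
    calc A2 ≤ ∫ x, f x * M x ^ (s - 1) ∂μ := step1
    _ ≤ (∫ x, f x ^ s ∂μ) ^ (1 / s) * (∫ x, (M x ^ (s - 1)) ^ s' ∂μ) ^ (1 / s') := step2
    _ = A1 ^ (1 / s) * A3 ^ (1 / s') := by rw [hMs_eq]
  -- Conclusion: show A2 ≤ c ^ (1/(s-1)) * A3
  show A2 ≤ c ^ (1 / (s - 1)) * A3
  rcases eq_or_lt_of_le hA2nonneg with hA2z | hA2pos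
  · rw [← hA2z]
    exact mul_nonneg (Real.rpow_nonneg hc _) hA3nonneg
  · have h1 : A2 ≤ c ^ (1 / s) * A2 ^ (1 / s) * A3 ^ (1 / s') := by
      calc A2 ≤ A1 ^ (1 / s) * A3 ^ (1 / s') := hmain
      _ ≤ (c * A2) ^ (1 / s) * A3 ^ (1 / s') :=
          mul_le_mul_of_nonneg_right
            (Real.rpow_le_rpow hA1nonneg hA1le (le_of_lt hpq.one_div_pos))
            (Real.rpow_nonneg hA3nonneg _)
      _ = c ^ (1 / s) * A2 ^ (1 / s) * A3 ^ (1 / s') := by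
          rw [Real.mul_rpow hc (le_of_lt hA2pos)]
    have hA2split : A2 = A2 ^ (1 / s) * A2 ^ (1 / s') := by
      rw [← Real.rpow_add hA2pos]
      have : 1 / s + 1 / s' = 1 := by
        have := hpq.inv_add_inv_eq_one
        rw [one_div, one_div, this]
      rw [this, Real.rpow_one]
    have h2 : A2 ^ (1 / s') ≤ c ^ (1 / s) * A3 ^ (1 / s') := by
      have hpos' : 0 < A2 ^ (1 / s) := Real.rpow_pos_of_pos hA2pos _
      refine le_of_mul_le_mul_left ?_ hpos'
      calc A2 ^ (1 / s) * A2 ^ (1 / s') = A2 := hA2split.symm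
      _ ≤ c ^ (1 / s) * A2 ^ (1 / s) * A3 ^ (1 / s') := h1
      _ = A2 ^ (1 / s) * (c ^ (1 / s) * A3 ^ (1 / s')) := by ring
    have h3 : A2 ≤ (c ^ (1 / s) * A3 ^ (1 / s')) ^ s' := by
      have := Real.rpow_le_rpow (Real.rpow_nonneg (le_of_lt hA2pos) _) h2 (le_of_lt hs'pos)
      rwa [← Real.rpow_mul (le_of_lt hA2pos), one_div_mul_cancel (ne_of_gt hs'pos),
        Real.rpow_one] at this
    calc A2 ≤ (c ^ (1 / s) * A3 ^ (1 / s')) ^ s' := h3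
    _ = c ^ (1 / s * s') * A3 ^ (1 / s' * s') := by
        rw [Real.mul_rpow (Real.rpow_nonneg hc _) (Real.rpow_nonneg hA3nonneg _),
          ← Real.rpow_mul hc, ← Real.rpow_mul hA3nonneg]
    _ = c ^ (1 / (s - 1)) * A3 := by
        have e1 : 1 / s * s' = 1 / (s - 1) := by
          rw [hs'def]
          field_simp
        have e2 : 1 / s' * s' = 1 := by
          rw [one_div, inv_mul_cancel₀ (ne_of_gt hs'pos)]
        rw [e1, e2, Real.rpow_one]

end
end

section
/- Let 1 < q ≤ 2 and let ω, σ be finite measures, K : D → [0,∞) supported on finitely many dyadic cubes contained in Q_0, with ω(Q) > 0 whenever K(Q) > 0. Then ∫_{Q_0} (∑_{Q ⊆ Q_0} K(Q) σ(Q) 1_Q)^q dω ≤ q ∫_{Q_0} ∑_{Q ⊆ Q_0} K(Q) ω(Q) ((∫_Q K̄_ω(Q) dσ))^{q-1} 1_Q dσ, where K̄_ω(Q)(x) = (1/ω(Q)) ∑_{Q' ⊆ Q} K(Q') ω(Q') 1_{Q'}(x). -/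
open MeasureTheory Finset Classical

noncomputable section

lemma measurableSet_dyadicCube (n : ℕ) (i : ℤ) (k : Fin n → ℤ) :
    MeasurableSet (dyadicCube n i k) := by
  have : dyadicCube n i k =
      ⋂ j, (fun x : Fin n → ℝ => x j) ⁻¹' Set.Ico ((k j : ℝ) * 2 ^ (-i)) (((k j : ℝ) + 1) * 2 ^ (-i)) := by
    ext x; simp [dyadicCube, Set.mem_iInter, Set.mem_Ico]
  rw [this]
  exact MeasurableSet.iInter fun j => (measurable_pi_apply j) measurableSet_Ico

-- 1D nesting
lemma dyadic_1d_subset {i i' a b : ℤ} (h : i' ≤ i) {t : ℝ}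
    (h1 : (a : ℝ) * 2 ^ (-i) ≤ t ∧ t < ((a : ℝ) + 1) * 2 ^ (-i))
    (h2 : (b : ℝ) * 2 ^ (-i') ≤ t ∧ t < ((b : ℝ) + 1) * 2 ^ (-i'))
    {y : ℝ} (hy : (a : ℝ) * 2 ^ (-i) ≤ y ∧ y < ((a : ℝ) + 1) * 2 ^ (-i)) :
    (b : ℝ) * 2 ^ (-i') ≤ y ∧ y < ((b : ℝ) + 1) * 2 ^ (-i') := by
  set m : ℕ := (i - i').toNat with hm
  have hM : (2 : ℝ) ^ (-i') = (2 ^ m : ℤ) * 2 ^ (-i) := by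
    push_cast
    rw [← zpow_natCast (2:ℝ) m, ← zpow_add₀ (by norm_num : (2:ℝ) ≠ 0)]
    congr 1
    omega
  have hpos : (0:ℝ) < 2 ^ (-i) := by positivity
  -- integer inequalities
  have hba : (b * 2 ^ m : ℤ) ≤ a := by
    have : ((b * 2 ^ m : ℤ) : ℝ) * 2 ^ (-i) < ((a:ℝ) + 1) * 2 ^ (-i) := by
      push_cast
      calc ((b:ℝ) * 2 ^ m) * 2 ^ (-i) = (b:ℝ) * 2 ^ (-i') := by rw [hM]; push_cast; ring
        _ ≤ t := h2.1
        _ < ((a:ℝ) + 1) * 2 ^ (-i) := h1.2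
    have := (mul_lt_mul_iff_of_pos_right hpos).1 this
    exact_mod_cast Int.lt_add_one_iff.1 (by exact_mod_cast this)
  have hab : (a + 1 : ℤ) ≤ (b + 1) * 2 ^ m := by
    have : ((a:ℝ)) * 2 ^ (-i) < (((b+1) * 2 ^ m : ℤ) : ℝ) * 2 ^ (-i) := by
      push_cast
      calc (a:ℝ) * 2 ^ (-i) ≤ t := h1.1
        _ < ((b:ℝ) + 1) * 2 ^ (-i') := h2.2
        _ = ((b:ℝ) + 1) * 2 ^ m * 2 ^ (-i) := by rw [hM]; push_cast; ring
    have := (mul_lt_mul_iff_of_pos_right hpos).1 this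
    exact_mod_cast Int.lt_iff_add_one_le.1 (by exact_mod_cast this)
  constructor
  · calc (b : ℝ) * 2 ^ (-i') = ((b * 2 ^ m : ℤ) : ℝ) * 2 ^ (-i) := by rw [hM]; push_cast; ring
      _ ≤ (a : ℝ) * 2 ^ (-i) := by
          apply mul_le_mul_of_nonneg_right _ hpos.le
          exact_mod_cast hba
      _ ≤ y := hy.1
  · calc y < ((a:ℝ) + 1) * 2 ^ (-i) := hy.2
      _ ≤ (((b + 1) * 2 ^ m : ℤ) : ℝ) * 2 ^ (-i) := by
          apply mul_le_mul_of_nonneg_right _ hpos.le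
          exact_mod_cast hab
      _ = ((b : ℝ) + 1) * 2 ^ (-i') := by rw [hM]; push_cast; ring

lemma dyadic_subset_of_le {n : ℕ} {i i' : ℤ} {k k' : Fin n → ℤ} (h : i' ≤ i)
    {x : Fin n → ℝ} (hx : x ∈ dyadicCube n i k) (hx' : x ∈ dyadicCube n i' k') :
    dyadicCube n i k ⊆ dyadicCube n i' k' := by
  intro y hy j
  exact dyadic_1d_subset h (hx j) (hx' j) (hy j)

lemma dyadic_nested {n : ℕ} {i i' : ℤ} {k k' : Fin n → ℤ} {x : Fin n → ℝ}
    (hx : x ∈ dyadicCube n i k) (hx' : x ∈ dyadicCube n i' k') :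
    dyadicCube n i k ⊆ dyadicCube n i' k' ∨ dyadicCube n i' k' ⊆ dyadicCube n i k := by
  rcases le_total i' i with h | h
  · exact Or.inl (dyadic_subset_of_le h hx hx')
  · exact Or.inr (dyadic_subset_of_le h hx' hx)




lemma rpow_add_le_aux {A B q : ℝ} (hA : 0 ≤ A) (hB : 0 ≤ B) (hq : 1 ≤ q) :
    (A + B) ^ q ≤ A ^ q + q * B * (A + B) ^ (q - 1) := by
  rcases eq_or_lt_of_le hB with rfl | hB'
  · simp
  have hab : A < A + B := by linarith
  have hcont : ContinuousOn (fun x : ℝ => x ^ q) (Set.Icc A (A + B)) := by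
    intro x _
    exact (Real.continuousAt_rpow_const x q (Or.inr (by linarith))).continuousWithinAt
  have hderiv : ∀ x ∈ Set.Ioo A (A + B),
      HasDerivAt (fun x : ℝ => x ^ q) (q * x ^ (q - 1)) x :=
    fun x _ => Real.hasDerivAt_rpow_const (Or.inr hq)
  obtain ⟨c, hc, hceq⟩ := exists_hasDerivAt_eq_slope (fun x : ℝ => x ^ q)
    (fun x => q * x ^ (q - 1)) hab hcont hderiv
  have hc0 : 0 ≤ c := le_trans hA hc.1.le
  have hcle : c ^ (q - 1) ≤ (A + B) ^ (q - 1) :=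
    Real.rpow_le_rpow hc0 hc.2.le (by linarith)
  have : (A + B) ^ q - A ^ q = q * c ^ (q - 1) * B := by
    rw [hceq, show A + B - A = B by ring, div_mul_cancel₀ _ hB'.ne']
  have hfin : q * c ^ (q - 1) * B ≤ q * B * (A + B) ^ (q - 1) := by
    have h1 : q * c ^ (q - 1) ≤ q * (A + B) ^ (q - 1) :=
      mul_le_mul_of_nonneg_left hcle (by linarith)
    calc q * c ^ (q - 1) * B ≤ q * (A + B) ^ (q - 1) * B :=
          mul_le_mul_of_nonneg_right h1 hB
      _ = q * B * (A + B) ^ (q - 1) := by ring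
  linarith

section
variable {ι : Type*} (r : ι → ι → Prop)

lemma exists_max_of_total (hrefl : ∀ t, r t t)
    (htrans : ∀ {a b c}, r a b → r b c → r a c)
    (T : Finset ι) (hne : T.Nonempty)
    (htot : ∀ s ∈ T, ∀ t ∈ T, r s t ∨ r t s) :
    ∃ t₀ ∈ T, ∀ s ∈ T, r s t₀ := by
  classical
  induction T using Finset.cons_induction with
  | empty => exact absurd hne (by simp)
  | cons a s ha ih =>
    rcases s.eq_empty_or_nonempty with rfl | hs
    · exact ⟨a, by simp, by simp [hrefl]⟩
    · obtain ⟨t₀, ht₀s, ht₀⟩ := ih hs (fun u hu v hv =>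
        htot u (Finset.mem_cons_of_mem hu) v (Finset.mem_cons_of_mem hv))
      rcases htot a (Finset.mem_cons_self a s) t₀ (Finset.mem_cons_of_mem ht₀s) with h | h
      · refine ⟨t₀, Finset.mem_cons_of_mem ht₀s, fun u hu => ?_⟩
        rcases Finset.mem_cons.1 hu with rfl | hu
        · exact h
        · exact ht₀ u hu
      · refine ⟨a, Finset.mem_cons_self a s, fun u hu => ?_⟩
        rcases Finset.mem_cons.1 hu with rfl | hu
        · exact hrefl u
        · exact htrans (ht₀ u hu) h

lemma sum_rpow_le_q_mul [DecidableEq ι] (q : ℝ) (hq : 1 ≤ q) (a : ι → ℝ) (ha : ∀ t, 0 ≤ a t)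
    (hrefl : ∀ t, r t t) (htrans : ∀ {a b c}, r a b → r b c → r a c)
    [∀ s t, Decidable (r s t)] :
    ∀ (N : ℕ) (T : Finset ι), T.card ≤ N → (∀ s ∈ T, ∀ t ∈ T, r s t ∨ r t s) →
    (∑ t ∈ T, a t) ^ q ≤ q * ∑ t ∈ T, a t * (∑ s ∈ T.filter (fun s => r s t), a s) ^ (q - 1) := by
  intro N
  induction N with
  | zero =>
    intro T hT _
    simp only [Nat.le_zero, Finset.card_eq_zero] at hT
    subst hT
    simp [Real.zero_rpow (by linarith : q ≠ 0)]
  | succ N ih =>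
    intro T hT htot
    rcases T.eq_empty_or_nonempty with rfl | hne
    · simp [Real.zero_rpow (by linarith : q ≠ 0)]
    obtain ⟨t₀, ht₀T, ht₀⟩ := exists_max_of_total r hrefl htrans T hne htot
    set T' := T.erase t₀ with hT'
    have hins : T = insert t₀ T' := by simp [hT', Finset.insert_erase ht₀T]
    have ht₀T' : t₀ ∉ T' := Finset.notMem_erase _ _
    have hsums : ∑ t ∈ T, a t = (∑ t ∈ T', a t) + a t₀ := by
      rw [hins, Finset.sum_insert ht₀T']; ring
    have hA : (0:ℝ) ≤ ∑ t ∈ T', a t := Finset.sum_nonneg fun t _ => ha t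
    have hAB : (0:ℝ) ≤ ∑ t ∈ T, a t := Finset.sum_nonneg fun t _ => ha t
    have key : (∑ t ∈ T, a t) ^ q ≤ (∑ t ∈ T', a t) ^ q +
        q * a t₀ * (∑ t ∈ T, a t) ^ (q - 1) := by
      rw [hsums]; exact rpow_add_le_aux hA (ha t₀) hq
    have hcard : T'.card ≤ N := by
      have h1 : T'.card = T.card - 1 := by
        rw [hT']; exact Finset.card_erase_of_mem ht₀T
      have h2 : 1 ≤ T.card := Finset.card_pos.2 hne
      omega
    have htot' : ∀ s ∈ T', ∀ t ∈ T', r s t ∨ r t s := fun s hs t ht =>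
      htot s (Finset.mem_of_mem_erase hs) t (Finset.mem_of_mem_erase ht)
    have hih := ih T' hcard htot'
    -- inner sums over T' are ≤ inner sums over T
    have hmono : ∀ t ∈ T', a t * (∑ s ∈ T'.filter (fun s => r s t), a s) ^ (q - 1) ≤
        a t * (∑ s ∈ T.filter (fun s => r s t), a s) ^ (q - 1) := by
      intro t _
      apply mul_le_mul_of_nonneg_left _ (ha t)
      apply Real.rpow_le_rpow (Finset.sum_nonneg fun s _ => ha s) _ (by linarith)
      apply Finset.sum_le_sum_of_subset_of_nonneg
      · exact Finset.filter_subset_filter _ (Finset.erase_subset _ _)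
      · exact fun s _ _ => ha s
    have hfull : T.filter (fun s => r s t₀) = T :=
      Finset.filter_true_of_mem (fun s hs => ht₀ s hs)
    calc (∑ t ∈ T, a t) ^ q
        ≤ (∑ t ∈ T', a t) ^ q + q * a t₀ * (∑ t ∈ T, a t) ^ (q - 1) := key
      _ ≤ q * (∑ t ∈ T', a t * (∑ s ∈ T'.filter (fun s => r s t), a s) ^ (q - 1)) +
          q * a t₀ * (∑ t ∈ T, a t) ^ (q - 1) := by linarith [hih]
      _ ≤ q * (∑ t ∈ T', a t * (∑ s ∈ T.filter (fun s => r s t), a s) ^ (q - 1)) +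
          q * a t₀ * (∑ t ∈ T, a t) ^ (q - 1) := by
          have := Finset.sum_le_sum hmono
          nlinarith [this]
      _ = q * ∑ t ∈ T, a t * (∑ s ∈ T.filter (fun s => r s t), a s) ^ (q - 1) := by
          conv_rhs => rw [← Finset.sum_erase_add T _ ht₀T]
          rw [hfull, ← hT']
          ring


lemma integrable_of_bdd {α : Type*} [MeasurableSpace α] (μ : Measure α) [IsFiniteMeasure μ]
    {f : α → ℝ} (hf : Measurable f) {C : ℝ} (h : ∀ x, |f x| ≤ C) : Integrable f μ :=
  ⟨hf.aestronglyMeasurable, HasFiniteIntegral.of_bounded (ae_of_all _ h)⟩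

theorem A1_le_A2_integral_form (n : ℕ) (σ ω : Measure (Fin n → ℝ))
    [IsFiniteMeasure σ] [IsFiniteMeasure ω] (q : ℝ) (hq1 : 1 < q) (hq2 : q ≤ 2)
    (Q₀ : Set (Fin n → ℝ)) (hQ₀ : IsDyadicCube n Q₀)
    (S : Finset (ℤ × (Fin n → ℤ))) (hS : ∀ p ∈ S, dyadicCube n p.1 p.2 ⊆ Q₀)
    (K : ℤ × (Fin n → ℤ) → ℝ) (hK : ∀ p, 0 ≤ K p)
    (hω : ∀ p ∈ S, K p ≠ 0 → 0 < (ω (dyadicCube n p.1 p.2)).toReal) :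
    ∫ x in Q₀, (∑ p ∈ S, K p * (σ (dyadicCube n p.1 p.2)).toReal *
        (dyadicCube n p.1 p.2).indicator 1 x) ^ q ∂ω ≤
      q * ∫ x in Q₀, (∑ p ∈ S, K p * (ω (dyadicCube n p.1 p.2)).toReal *
        ((1 / (ω (dyadicCube n p.1 p.2)).toReal) *
          ∑ p' ∈ S.filter fun p' => dyadicCube n p'.1 p'.2 ⊆ dyadicCube n p.1 p.2,
            K p' * (ω (dyadicCube n p'.1 p'.2)).toReal *
              (σ (dyadicCube n p'.1 p'.2)).toReal) ^ (q - 1) *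
        (dyadicCube n p.1 p.2).indicator 1 x) ∂σ := by
  classical
  set Q : ℤ × (Fin n → ℤ) → Set (Fin n → ℝ) := fun p => dyadicCube n p.1 p.2 with hQdef
  have hQm : ∀ p, MeasurableSet (Q p) := fun p => measurableSet_dyadicCube n p.1 p.2
  set a : ℤ × (Fin n → ℤ) → ℝ := fun p => K p * (σ (Q p)).toReal with ha_def
  have ha : ∀ p, 0 ≤ a p := fun p => mul_nonneg (hK p) ENNReal.toReal_nonneg
  set g : ℤ × (Fin n → ℤ) → (Fin n → ℝ) → ℝ := fun p x =>
    ∑ p' ∈ S.filter (fun p' => Q p' ⊆ Q p), a p' * (Q p').indicator 1 x with hg_def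
  set W : ℤ × (Fin n → ℤ) → ℝ := fun p => (1 / (ω (Q p)).toReal) *
    ∑ p' ∈ S.filter (fun p' => Q p' ⊆ Q p),
      K p' * (ω (Q p')).toReal * (σ (Q p')).toReal with hW_def
  set f : (Fin n → ℝ) → ℝ := fun x => ∑ p ∈ S, a p * (Q p).indicator 1 x with hf_def
  -- basic bounds
  have hind01 : ∀ (s : Set (Fin n → ℝ)) (x : Fin n → ℝ),
      0 ≤ s.indicator (1 : (Fin n → ℝ) → ℝ) x ∧ s.indicator (1 : (Fin n → ℝ) → ℝ) x ≤ 1 := by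
    intro s x
    by_cases hx : x ∈ s <;> simp [hx]
  set Ca : ℝ := ∑ p ∈ S, a p with hCa_def
  have hCa0 : 0 ≤ Ca := Finset.sum_nonneg fun p _ => ha p
  have hf0 : ∀ x, 0 ≤ f x := fun x =>
    Finset.sum_nonneg fun p _ => mul_nonneg (ha p) (hind01 _ x).1
  have hfC : ∀ x, f x ≤ Ca := by
    intro x
    apply Finset.sum_le_sum
    intro p _
    calc a p * (Q p).indicator 1 x ≤ a p * 1 :=
          mul_le_mul_of_nonneg_left (hind01 _ x).2 (ha p)
      _ = a p := mul_one _
  have hg0 : ∀ p x, 0 ≤ g p x := fun p x =>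
    Finset.sum_nonneg fun p' _ => mul_nonneg (ha p') (hind01 _ x).1
  have hgC : ∀ p x, g p x ≤ Ca := by
    intro p x
    calc g p x ≤ ∑ p' ∈ S.filter (fun p' => Q p' ⊆ Q p), a p' := by
          apply Finset.sum_le_sum
          intro p' _
          calc a p' * (Q p').indicator 1 x ≤ a p' * 1 :=
                mul_le_mul_of_nonneg_left (hind01 _ x).2 (ha p')
            _ = a p' := mul_one _
      _ ≤ Ca := Finset.sum_le_sum_of_subset_of_nonneg (Finset.filter_subset _ _)
          (fun p' _ _ => ha p')
  -- measurability
  have hfmeas : Measurable f :=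
    Finset.measurable_sum _ fun p _ => ((measurable_one.indicator (hQm p)).const_mul (a p))
  have hgmeas : ∀ p, Measurable (g p) := fun p =>
    Finset.measurable_sum _ fun p' _ => ((measurable_one.indicator (hQm p')).const_mul (a p'))
  have hq1' : (1:ℝ) ≤ q := hq1.le
  have hqm1 : (0:ℝ) ≤ q - 1 := by linarith
  -- pointwise inequality
  have hpoint : ∀ x, f x ^ q ≤
      q * ∑ p ∈ S, a p * (Q p).indicator 1 x * (g p x) ^ (q - 1) := by
    intro x
    set T : Finset (ℤ × (Fin n → ℤ)) := S.filter (fun p => x ∈ Q p) with hT_def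
    have hfT : f x = ∑ t ∈ T, a t := by
      rw [hT_def, Finset.sum_filter]
      apply Finset.sum_congr rfl
      intro p _
      by_cases hx : x ∈ Q p <;> simp [hx]
    have hinner : ∀ t ∈ T, ∑ s ∈ T.filter (fun s => Q s ⊆ Q t), a s = g t x := by
      intro t _
      rw [hT_def, Finset.filter_comm, hg_def]
      simp only []
      rw [Finset.sum_filter]
      apply Finset.sum_congr rfl
      intro p' _
      by_cases hx : x ∈ Q p' <;> simp [hx]
    have htot : ∀ s ∈ T, ∀ t ∈ T, Q s ⊆ Q t ∨ Q t ⊆ Q s := by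
      intro s hs t ht
      rw [hT_def, Finset.mem_filter] at hs ht
      exact dyadic_nested hs.2 ht.2
    have hkey := sum_rpow_le_q_mul (fun s t => Q s ⊆ Q t) q hq1' a ha
      (fun t => subset_rfl) (fun h1 h2 => h1.trans h2) T.card T le_rfl htot
    rw [← hfT] at hkey
    refine hkey.trans ?_
    apply mul_le_mul_of_nonneg_left _ (by linarith : (0:ℝ) ≤ q)
    have : ∀ t ∈ T, a t * (∑ s ∈ T.filter (fun s => Q s ⊆ Q t), a s) ^ (q - 1) =
        a t * (Q t).indicator 1 x * (g t x) ^ (q - 1) := by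
      intro t ht
      rw [hinner t ht]
      have hxt : x ∈ Q t := (Finset.mem_filter.1 ht).2
      simp [hxt]
    rw [Finset.sum_congr rfl this, hT_def, Finset.sum_filter]
    apply le_of_eq
    apply Finset.sum_congr rfl
    intro p _
    by_cases hx : x ∈ Q p <;> simp [hx]
  -- finite restricted measures
  have hres : ∀ (μ : Measure (Fin n → ℝ)) [IsFiniteMeasure μ] (s : Set (Fin n → ℝ)),
      IsFiniteMeasure (μ.restrict s) := by
    intro μ hμ s
    exact ⟨by rw [Measure.restrict_apply_univ]; exact measure_lt_top μ _⟩
  have hresω : ∀ s, IsFiniteMeasure (ω.restrict s) := fun s => hres ω s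
  have hresσ : ∀ s, IsFiniteMeasure (σ.restrict s) := fun s => hres σ s
  -- integral of indicator-type functions
  have hind_int : ∀ (μ : Measure (Fin n → ℝ)) (p : ℤ × (Fin n → ℤ)), p ∈ S →
      ∫ x in Q₀, (Q p).indicator (1 : (Fin n → ℝ) → ℝ) x ∂μ = (μ (Q p)).toReal := by
    intro μ p hp
    rw [integral_indicator_one (hQm p), measureReal_def, Measure.restrict_apply (hQm p),
      Set.inter_eq_self_of_subset_left (hS p hp)]
  -- Step 2 machinery: the function under the integral on the majorant side
  set F : (Fin n → ℝ) → ℝ := fun x =>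
    ∑ p ∈ S, a p * (Q p).indicator 1 x * (g p x) ^ (q - 1) with hF_def
  have hgq_meas : ∀ p, Measurable (fun x => (g p x) ^ (q - 1)) := fun p =>
    (hgmeas p).pow measurable_const
  have hgq_bdd : ∀ p x, |(g p x) ^ (q - 1)| ≤ Ca ^ (q - 1) := by
    intro p x
    rw [abs_of_nonneg (Real.rpow_nonneg (hg0 p x) _)]
    exact Real.rpow_le_rpow (hg0 p x) (hgC p x) hqm1
  have hFmeas : Measurable F :=
    Finset.measurable_sum _ fun p _ =>
      ((measurable_one.indicator (hQm p)).const_mul (a p)).mul (hgq_meas p)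
  have hFbdd : ∀ x, |F x| ≤ ∑ p ∈ S, a p * Ca ^ (q - 1) := by
    intro x
    refine (Finset.abs_sum_le_sum_abs _ _).trans (Finset.sum_le_sum fun p _ => ?_)
    rw [abs_mul, abs_mul, abs_of_nonneg (ha p), abs_of_nonneg (hind01 _ x).1]
    calc a p * (Q p).indicator 1 x * |(g p x) ^ (q - 1)|
        ≤ a p * 1 * (Ca ^ (q - 1)) := by
          apply mul_le_mul (mul_le_mul_of_nonneg_left (hind01 _ x).2 (ha p)) (hgq_bdd p x)
            (abs_nonneg _) (by rw [mul_one]; exact ha p)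
      _ = a p * Ca ^ (q - 1) := by ring
  have hfq_meas : Measurable (fun x => f x ^ q) := hfmeas.pow measurable_const
  have hfq_bdd : ∀ x, |f x ^ q| ≤ Ca ^ q := by
    intro x
    rw [abs_of_nonneg (Real.rpow_nonneg (hf0 x) _)]
    exact Real.rpow_le_rpow (hf0 x) (hfC x) (by linarith)
  have hint1 : Integrable (fun x => f x ^ q) (ω.restrict Q₀) :=
    have := hresω Q₀
    integrable_of_bdd _ hfq_meas hfq_bdd
  have hint2 : Integrable F (ω.restrict Q₀) :=
    have := hresω Q₀
    integrable_of_bdd _ hFmeas hFbdd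
  -- each term of F is integrable
  have hterm_int : ∀ p ∈ S,
      Integrable (fun x => a p * (Q p).indicator 1 x * (g p x) ^ (q - 1)) (ω.restrict Q₀) := by
    intro p _
    have := hresω Q₀
    apply integrable_of_bdd _ (((measurable_one.indicator (hQm p)).const_mul (a p)).mul
      (hgq_meas p)) (C := a p * Ca ^ (q - 1))
    intro x
    simp only [Pi.mul_apply]
    rw [abs_mul, abs_mul, abs_of_nonneg (ha p), abs_of_nonneg (hind01 _ x).1]
    calc a p * (Q p).indicator 1 x * |(g p x) ^ (q - 1)|
        ≤ a p * 1 * (Ca ^ (q - 1)) :=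
          mul_le_mul (mul_le_mul_of_nonneg_left (hind01 _ x).2 (ha p)) (hgq_bdd p x)
            (abs_nonneg _) (by rw [mul_one]; exact ha p)
      _ = a p * Ca ^ (q - 1) := by ring
  -- ∫ F = ∑ a p * I p
  set I : ℤ × (Fin n → ℤ) → ℝ := fun p => ∫ x in Q p, (g p x) ^ (q - 1) ∂ω with hI_def
  have hFint : ∫ x in Q₀, F x ∂ω = ∑ p ∈ S, a p * I p := by
    rw [hF_def]
    simp only []
    rw [integral_finset_sum _ hterm_int]
    apply Finset.sum_congr rfl
    intro p hp
    have heq : ∀ x, a p * (Q p).indicator 1 x * (g p x) ^ (q - 1) =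
        a p * (Q p).indicator (fun y => (g p y) ^ (q - 1)) x := by
      intro x
      by_cases hx : x ∈ Q p <;> simp [hx]
    simp_rw [heq]
    rw [integral_const_mul _ _, integral_indicator (hQm p), Measure.restrict_restrict (hQm p),
      Set.inter_eq_self_of_subset_left (hS p hp)]
  -- Jensen: I p ≤ ω(Qp) * (W p)^{q-1} when K p ≠ 0
  have hWnn : ∀ p, 0 ≤ W p := by
    intro p
    apply mul_nonneg (by positivity)
    apply Finset.sum_nonneg
    intro p' _
    have := hK p'
    positivity
  have hJensen : ∀ p ∈ S, K p ≠ 0 → I p ≤ (ω (Q p)).toReal * (W p) ^ (q - 1) := by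
    intro p hp hKp
    have hωp := hω p hp hKp
    have hωp0 : ω (Q p) ≠ 0 := by
      intro h
      rw [h] at hωp
      simp at hωp
    have hωpt : ω (Q p) ≠ ⊤ := measure_ne_top ω _
    have := hresω (Q p)
    have hgi : IntegrableOn (g p) (Q p) ω :=
      integrable_of_bdd _ (hgmeas p) (C := Ca) (fun x => by
        rw [abs_of_nonneg (hg0 p x)]; exact hgC p x)
    have hgqi : IntegrableOn ((fun y => y ^ (q - 1)) ∘ g p) (Q p) ω :=
      integrable_of_bdd _ (hgq_meas p) (hgq_bdd p)
    have hJ := (Real.concaveOn_rpow hqm1 (by linarith)).le_map_set_average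
      (fun y hy => (Real.continuousAt_rpow_const y (q - 1)
        (Or.inr hqm1)).continuousWithinAt)
      isClosed_Ici hωp0 hωpt (ae_of_all _ fun x => Set.mem_Ici.2 (hg0 p x)) hgi hgqi
    -- identify averages
    have havg : ∀ (h : (Fin n → ℝ) → ℝ),
        ⨍ x in Q p, h x ∂ω = (ω (Q p)).toReal⁻¹ * ∫ x in Q p, h x ∂ω := by
      intro h
      rw [average_eq, measureReal_def, Measure.restrict_apply_univ, smul_eq_mul]
    have hgint : ∫ x in Q p, g p x ∂ω =
        ∑ p' ∈ S.filter (fun p' => Q p' ⊆ Q p), a p' * (ω (Q p')).toReal := by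
      rw [hg_def]
      simp only []
      rw [integral_finset_sum]
      · apply Finset.sum_congr rfl
        intro p' hp'
        have hsub : Q p' ⊆ Q p := (Finset.mem_filter.1 hp').2
        rw [integral_const_mul _ _, integral_indicator_one (hQm p'),
          measureReal_def, Measure.restrict_apply (hQm p'), Set.inter_eq_self_of_subset_left hsub]
      · intro p' _
        apply integrable_of_bdd _ ((measurable_one.indicator (hQm p')).const_mul (a p'))
          (C := a p')
        intro x
        rw [abs_mul, abs_of_nonneg (ha p'), abs_of_nonneg (hind01 _ x).1]
        calc a p' * (Q p').indicator 1 x ≤ a p' * 1 :=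
              mul_le_mul_of_nonneg_left (hind01 _ x).2 (ha p')
          _ = a p' := mul_one _
    have hWeq : ⨍ x in Q p, g p x ∂ω = W p := by
      rw [havg, hgint, hW_def]
      simp only [one_div]
      congr 1
      apply Finset.sum_congr rfl
      intro p' _
      rw [ha_def]
      ring
    have hIeq : I p = (ω (Q p)).toReal * ⨍ x in Q p, (g p x) ^ (q - 1) ∂ω := by
      rw [havg, hI_def]
      field_simp
      exact (mul_div_cancel_right₀ _ hωp.ne').symm
    rw [hIeq, ← hWeq]
    apply mul_le_mul_of_nonneg_left _ ENNReal.toReal_nonneg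
    simpa [Function.comp] using hJ
  -- RHS computation
  have hRHS : ∫ x in Q₀, (∑ p ∈ S, K p * (ω (Q p)).toReal * (W p) ^ (q - 1) *
      (Q p).indicator 1 x) ∂σ =
      ∑ p ∈ S, K p * (ω (Q p)).toReal * (W p) ^ (q - 1) * (σ (Q p)).toReal := by
    have := hresσ Q₀
    rw [integral_finset_sum]
    · apply Finset.sum_congr rfl
      intro p hp
      rw [integral_const_mul _ _, hind_int σ p hp]
    · intro p _
      apply integrable_of_bdd _ ((measurable_one.indicator (hQm p)).const_mul _)
        (C := |K p * (ω (Q p)).toReal * (W p) ^ (q - 1)|)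
      intro x
      rw [abs_mul]
      calc |K p * (ω (Q p)).toReal * W p ^ (q - 1)| * |(Q p).indicator 1 x|
          ≤ |K p * (ω (Q p)).toReal * W p ^ (q - 1)| * 1 := by
            apply mul_le_mul_of_nonneg_left _ (abs_nonneg _)
            rw [abs_of_nonneg (hind01 _ x).1]
            exact (hind01 _ x).2
        _ = _ := mul_one _
  -- put it all together
  have step1 : ∫ x in Q₀, f x ^ q ∂ω ≤ q * ∫ x in Q₀, F x ∂ω := by
    rw [← integral_const_mul _ _]
    exact integral_mono hint1 (hint2.const_mul q) hpoint
  have step2 : ∑ p ∈ S, a p * I p ≤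
      ∑ p ∈ S, K p * (ω (Q p)).toReal * (W p) ^ (q - 1) * (σ (Q p)).toReal := by
    apply Finset.sum_le_sum
    intro p hp
    by_cases hKp : K p = 0
    · simp [ha_def, hKp]
    · have h := hJensen p hp hKp
      calc a p * I p = K p * (σ (Q p)).toReal * I p := rfl
        _ ≤ K p * (σ (Q p)).toReal * ((ω (Q p)).toReal * W p ^ (q - 1)) :=
            mul_le_mul_of_nonneg_left h (mul_nonneg (hK p) ENNReal.toReal_nonneg)
        _ = K p * (ω (Q p)).toReal * W p ^ (q - 1) * (σ (Q p)).toReal := by ring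
  have final : ∫ x in Q₀, f x ^ q ∂ω ≤
      q * ∫ x in Q₀, (∑ p ∈ S, K p * (ω (Q p)).toReal * (W p) ^ (q - 1) *
        (Q p).indicator 1 x) ∂σ := by
    calc ∫ x in Q₀, f x ^ q ∂ω ≤ q * ∫ x in Q₀, F x ∂ω := step1
      _ = q * ∑ p ∈ S, a p * I p := by rw [hFint]
      _ ≤ q * ∑ p ∈ S, K p * (ω (Q p)).toReal * (W p) ^ (q - 1) * (σ (Q p)).toReal :=
          mul_le_mul_of_nonneg_left step2 (by linarith)
      _ = q * ∫ x in Q₀, (∑ p ∈ S, K p * (ω (Q p)).toReal * (W p) ^ (q - 1) *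
          (Q p).indicator 1 x) ∂σ := by rw [hRHS]
  exact final

end
end
end
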